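/- For every integer n ≥ 1, the Bost–Connes map ρₙ : A → A on the group algebra A = ℚ[ℚ/ℤ] is injective. -/

import Mathlib

open AddMonoidAlgebra

/-- The rational group algebra `A = ℚ[ℚ/ℤ]` of `ℚ/ℤ = AddCircle (1 : ℚ)`. -/
abbrev BC.A : Type := AddMonoidAlgebra ℚ (AddCircle (1 : ℚ))

/-- The Bost–Connes map `ρₙ : A → A`, the `ℚ`-linear map determined on the canonical
basis elements `e_r = single r 1` by `ρₙ(e_r) = (1/n) ∑_{s : n • s = r} e_s`, the
(finite) sum running over the `n` solutions `s ∈ ℚ/ℤ` of `n • s = r`. -/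
noncomputable def BC.rho (n : ℕ) : BC.A →ₗ[ℚ] BC.A :=
  (Finsupp.lift BC.A ℚ (AddCircle (1 : ℚ)) fun r =>
    (n : ℚ)⁻¹ • ∑ᶠ (s : AddCircle (1 : ℚ)) (_ : n • s = r), AddMonoidAlgebra.single s (1 : ℚ))
  ∘ₗ (AddMonoidAlgebra.coeffLinearEquiv ℚ).toLinearMap

/-- The multiplication-by-`n` map on `ℚ/ℤ` is surjective. -/
lemma BC.nsmul_surj (n : ℕ) (hn : 1 ≤ n) (r : AddCircle (1:ℚ)) : ∃ s, n • s = r := by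
  induction r using QuotientAddGroup.induction_on with
  | H x =>
    refine ⟨((x / n : ℚ) : AddCircle (1:ℚ)), ?_⟩
    rw [← AddCircle.coe_nsmul]
    congr 1
    rw [nsmul_eq_mul]
    field_simp

/-- The `n`-torsion of `ℚ/ℤ` is finite. -/
lemma BC.ker_finite (n : ℕ) (hn : 1 ≤ n) : {u : AddCircle (1:ℚ) | n • u = 0}.Finite := by
  haveI : Fact ((0:ℚ) < 1) := ⟨one_pos⟩
  have h : {u : AddCircle (1:ℚ) | n • u = 0} ⊆
      ⋃ d ∈ n.divisors, {u : AddCircle (1:ℚ) | addOrderOf u = d} := by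
    intro u hu
    have : addOrderOf u ∣ n := addOrderOf_dvd_of_nsmul_eq_zero hu
    exact Set.mem_biUnion (Nat.mem_divisors.mpr ⟨this, by omega⟩) rfl
  exact Set.Finite.subset (Set.Finite.biUnion (Nat.divisors n).finite_toSet
    (fun d hd => AddCircle.finite_setOfPred_addOrderOf_eq (p := (1:ℚ))
      (Nat.pos_of_mem_divisors hd))) h

/-- Each fiber of multiplication by `n` on `ℚ/ℤ` is finite. -/
lemma BC.fiber_finite (n : ℕ) (hn : 1 ≤ n) (r : AddCircle (1:ℚ)) :
    {s : AddCircle (1:ℚ) | n • s = r}.Finite := by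
  obtain ⟨s₀, hs₀⟩ := BC.nsmul_surj n hn r
  have hsub : {s : AddCircle (1:ℚ) | n • s = r} ⊆
      (fun u => u + s₀) '' {u : AddCircle (1:ℚ) | n • u = 0} := by
    intro u hu
    refine ⟨u - s₀, ?_, sub_add_cancel u s₀⟩
    have : n • u = r := hu
    simp only [Set.mem_setOf_eq, smul_sub, this, hs₀, sub_self]
  exact Set.Finite.subset ((BC.ker_finite n hn).image _) hsub

/-- Pointwise formula for the Bost–Connes map: `(ρₙ f)(s) = f(n • s) / n`. -/
lemma BC.rho_apply (n : ℕ) (hn : 1 ≤ n) (f : BC.A) (s : AddCircle (1:ℚ)) :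
    (BC.rho n f).coeff s = (n:ℚ)⁻¹ * f.coeff (n • s) := by
  have hfin := BC.fiber_finite n hn
  simp only [BC.rho, LinearMap.coe_comp, Function.comp_apply, LinearEquiv.coe_coe,
    AddMonoidAlgebra.coeffLinearEquiv_apply, Finsupp.lift_apply]
  rw [AddMonoidAlgebra.coeff_finsuppSum, Finsupp.sum_apply]
  have key : ∀ r : AddCircle (1:ℚ), ∀ a : ℚ,
      (a • ((n : ℚ)⁻¹ • ∑ᶠ (s' : AddCircle (1 : ℚ)) (_ : n • s' = r),
        AddMonoidAlgebra.single s' (1 : ℚ))).coeff s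
      = a * ((n:ℚ)⁻¹ * (if r = n • s then 1 else 0)) := by
    intro r a
    rw [finsum_cond_eq_sum_of_cond_iff _
      (t := (hfin r).toFinset) (fun {x} _ => by simp [Set.Finite.mem_toFinset])]
    rw [AddMonoidAlgebra.coeff_smul_apply, AddMonoidAlgebra.coeff_smul_apply,
      AddMonoidAlgebra.coeff_sum, Finsupp.finset_sum_apply]
    have : (∑ s' ∈ (hfin r).toFinset, (AddMonoidAlgebra.single s' (1:ℚ)).coeff s)
        = if r = n • s then 1 else 0 := by
      simp only [AddMonoidAlgebra.coeff_single, Finsupp.single_apply]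
      rw [Finset.sum_ite_eq' (hfin r).toFinset s (fun _ => (1:ℚ))]
      simp only [Set.Finite.mem_toFinset, Set.mem_setOf_eq]
      by_cases h : n • s = r
      · simp [h]
      · rw [if_neg h, if_neg (fun hc : r = n • s => h hc.symm)]
    rw [this, smul_eq_mul, smul_eq_mul]
  rw [Finsupp.sum, Finset.sum_congr rfl (fun r _ => key r (f.coeff r))]
  rw [Finset.sum_eq_single (n • s)]
  · by_cases h : f.coeff (n • s) = 0 <;> simp [h, mul_comm]
  · intro b _ hb; simp [hb]
  · intro h; simp [Finsupp.notMem_support_iff.mp h]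

/-- For every `n ≥ 1`, the Bost–Connes map `ρₙ` on `ℚ[ℚ/ℤ]` is injective. -/
theorem BC.rho_injective (n : ℕ) (hn : 1 ≤ n) :
    Function.Injective (BC.rho n) := by
  intro f g h
  ext r
  obtain ⟨s, hs⟩ := BC.nsmul_surj n hn r
  have h1 := BC.rho_apply n hn f s
  have h2 := BC.rho_apply n hn g s
  rw [h] at h1
  rw [h1] at h2
  have hne : (n:ℚ)⁻¹ ≠ 0 := by
    simp only [ne_eq, inv_eq_zero, Nat.cast_eq_zero]
    omega
  have := mul_left_cancel₀ hne h2
  rw [hs] at this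
  exact this
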